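/- Let G = (V,E) be a finite graph, p : V → ℝ^n a configuration with 1 + K(p_i·p_i) ≠ 0 for all i ∈ V, and let R_X(G,p) and R_E(G,p) be the |E|×(n|V|) matrices whose row for edge {i,j} has k_{ij} = ((1+K(p_i·p_j))/(1+K(p_i·p_i)))p_i - p_j in the columns of vertex i, k_{ji} in the columns of vertex j, and zeros elsewhere (for R_E, with p_i - p_j and p_j - p_i respectively). Let T_K(G,p) be the block-diagonal matrix with blocks T_{p_i} = I + K(p_i p_iᵀ). Then R_X(G,p) · T_K(G,p) = R_E(G,p), and consequently the kernels of R_X(G,p) and R_E(G,p) have the same dimension. -/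

import Mathlib

open scoped BigOperators

noncomputable section

/-- Standard Euclidean dot product on `ℝ^m`. -/
def dot {m : ℕ} (x y : Fin m → ℝ) : ℝ := ∑ i, x i * y i

/-- The rigidity-matrix row entry
`k_{ij} = ((1 + K (p_i·p_j))/(1 + K (p_i·p_i))) p_i - p_j`. -/
def kRow {n : ℕ} (K : ℝ) (p_i p_j : Fin n → ℝ) : Fin n → ℝ :=
  ((1 + K * dot p_i p_j) / (1 + K * dot p_i p_i)) • p_i - p_j

/-- The rigidity matrix of the framework in the projective model of the
curvature-`K` geometry: rows are indexed by edges `e` (with endpoints `a e`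
and `b e`), columns by pairs (vertex, coordinate). -/
def RX {V ι : Type*} [DecidableEq V] {n : ℕ} (K : ℝ) (a b : ι → V)
    (p : V → Fin n → ℝ) : Matrix ι (V × Fin n) ℝ :=
  fun e vl =>
    if vl.1 = a e then kRow K (p (a e)) (p (b e)) vl.2
    else if vl.1 = b e then kRow K (p (b e)) (p (a e)) vl.2
    else 0

/-- The Euclidean rigidity matrix: the row of edge `e` has `p_{a e} - p_{b e}`
in the columns of vertex `a e` and `p_{b e} - p_{a e}` in those of `b e`. -/
def RE {V ι : Type*} [DecidableEq V] {n : ℕ} (a b : ι → V)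
    (p : V → Fin n → ℝ) : Matrix ι (V × Fin n) ℝ :=
  fun e vl =>
    if vl.1 = a e then (p (a e) - p (b e)) vl.2
    else if vl.1 = b e then (p (b e) - p (a e)) vl.2
    else 0

/-- The block-diagonal matrix with blocks `T_{p_i} = I + K (p_i p_iᵀ)`. -/
def TK {V : Type*} [DecidableEq V] {n : ℕ} (K : ℝ) (p : V → Fin n → ℝ) :
    Matrix (V × Fin n) (V × Fin n) ℝ :=
  fun vl wm =>
    if vl.1 = wm.1 then
      (if vl.2 = wm.2 then 1 else 0) + K * p vl.1 vl.2 * p vl.1 wm.2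
    else 0

lemma dot_comm' {m : ℕ} (x y : Fin m → ℝ) : dot x y = dot y x := by
  unfold dot; exact Finset.sum_congr rfl fun i _ => mul_comm _ _

lemma kRow_key {n : ℕ} (K : ℝ) (x y : Fin n → ℝ) (h : 1 + K * dot x x ≠ 0) (m : Fin n) :
    kRow K x y m + K * x m * (∑ l, kRow K x y l * x l) = x m - y m := by
  have hdot : (∑ l, kRow K x y l * x l)
      = ((1 + K * dot x y) / (1 + K * dot x x)) * dot x x - dot x y := by
    have step : ∀ l, kRow K x y l * x l
        = ((1 + K * dot x y) / (1 + K * dot x x)) * (x l * x l) - y l * x l := by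
      intro l
      simp only [kRow, Pi.sub_apply, Pi.smul_apply, smul_eq_mul]
      ring
    rw [Finset.sum_congr rfl fun l _ => step l, Finset.sum_sub_distrib, ← Finset.mul_sum]
    rw [show (∑ l, x l * x l) = dot x x from rfl, show (∑ l, y l * x l) = dot y x from rfl,
      dot_comm' y x]
  rw [hdot]
  simp only [kRow, Pi.sub_apply, Pi.smul_apply, smul_eq_mul]
  field_simp
  ring

/-- Inverse of `TK`. -/
def TKI {V : Type*} [DecidableEq V] {n : ℕ} (K : ℝ) (p : V → Fin n → ℝ) :
    Matrix (V × Fin n) (V × Fin n) ℝ :=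
  fun vl wm =>
    if vl.1 = wm.1 then
      (if vl.2 = wm.2 then 1 else 0)
        - (K / (1 + K * dot (p vl.1) (p vl.1))) * p vl.1 vl.2 * p vl.1 wm.2
    else 0

lemma TK_mul_TKI {V : Type*} [Fintype V] [DecidableEq V] {n : ℕ} (K : ℝ)
    (p : V → Fin n → ℝ) (hp : ∀ i, 1 + K * dot (p i) (p i) ≠ 0) :
    TK K p * TKI K p = 1 := by
  ext ⟨v, l⟩ ⟨w, m⟩
  rw [Matrix.mul_apply, Fintype.sum_prod_type]
  rw [Finset.sum_eq_single v ?h0 (by simp)]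
  case h0 => intro u _ huv; simp [TK, Ne.symm huv]
  by_cases hvw : v = w
  · subst hvw
    set c := K / (1 + K * dot (p v) (p v)) with hc
    set d := dot (p v) (p v) with hd
    have hg : ∀ k, TKI K p (v, k) (v, m)
        = (if k = m then (1:ℝ) else 0) - c * p v k * p v m := by
      intro k; simp [TKI, c]
    have hT : ∀ k, TK K p (v, l) (v, k)
        = (if l = k then (1:ℝ) else 0) + K * p v l * p v k := by
      intro k; simp [TK]
    have step : ∀ k, TK K p (v, l) (v, k) * TKI K p (v, k) (v, m)
        = (if l = k then ((if k = m then (1:ℝ) else 0) - c * p v k * p v m) else 0)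
          + (K * p v l) * (p v k * (if k = m then (1:ℝ) else 0))
          - (K * p v l * (c * p v m)) * (p v k * p v k) := by
      intro k; rw [hg, hT]
      by_cases h2 : k = m
      · subst h2; by_cases h : l = k <;> simp [h] <;> ring
      · by_cases h : l = k <;> simp [h, h2] <;> ring
    rw [Finset.sum_congr rfl fun k _ => step k]
    rw [Finset.sum_sub_distrib, Finset.sum_add_distrib, ← Finset.mul_sum, ← Finset.mul_sum]
    have e1 : (∑ k, if l = k then ((if k = m then (1:ℝ) else 0) - c * p v k * p v m) else 0)
        = (if l = m then (1:ℝ) else 0) - c * p v l * p v m := by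
      rw [Finset.sum_ite_eq]; simp
    have e2 : (∑ k, p v k * (if k = m then (1:ℝ) else 0)) = p v m := by
      simp [Finset.sum_ite_eq']
    have e3 : (∑ k, p v k * p v k) = d := rfl
    rw [e1, e2, e3]
    have hcd : c * (1 + K * d) = K := div_mul_cancel₀ K (hp v)
    have : (if l = m then (1:ℝ) else 0) - c * p v l * p v m + K * p v l * p v m
          - K * p v l * (c * p v m) * d = (if l = m then (1:ℝ) else 0) := by
      linear_combination (-(p v l * p v m)) * hcd
    rw [this]
    simp [Matrix.one_apply]
  · simp [TKI, hvw, Matrix.one_apply, TK, Prod.ext_iff]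

lemma RX_mul_TK {V ι : Type*} [Fintype V] [DecidableEq V] [Fintype ι] {n : ℕ}
    (K : ℝ) (a b : ι → V) (hab : ∀ e, a e ≠ b e) (p : V → Fin n → ℝ)
    (hp : ∀ i, 1 + K * dot (p i) (p i) ≠ 0) :
    RX K a b p * TK K p = RE a b p := by
  ext e ⟨w, m⟩
  rw [Matrix.mul_apply, Fintype.sum_prod_type]
  rw [Finset.sum_eq_single w ?h0 (by simp)]
  case h0 =>
    intro u _ huw
    apply Finset.sum_eq_zero
    intro l _
    have : TK K p (u, l) (w, m) = 0 := by simp [TK, huw]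
    rw [this, mul_zero]
  have hTK : ∀ l, TK K p (w, l) (w, m)
      = (if l = m then (1:ℝ) else 0) + K * p w l * p w m := by
    intro l; simp [TK]
  have key : ∀ x : Fin n → ℝ, (∑ l, x l * TK K p (w, l) (w, m))
      = x m + K * p w m * ∑ l, x l * p w l := by
    intro x
    have step : ∀ l, x l * TK K p (w, l) (w, m)
        = (if l = m then x l else 0) + (K * p w m) * (x l * p w l) := by
      intro l; rw [hTK]; by_cases h : l = m <;> simp [h] <;> ring
    rw [Finset.sum_congr rfl fun l _ => step l, Finset.sum_add_distrib,
      ← Finset.mul_sum, Finset.sum_ite_eq' Finset.univ m x]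
    simp
  by_cases hwa : w = a e
  · subst hwa
    have hRX : ∀ l : Fin n, RX K a b p e (a e, l) = kRow K (p (a e)) (p (b e)) l := by
      intro l; simp [RX]
    rw [Finset.sum_congr rfl fun l _ => by rw [hRX l], key]
    have := kRow_key K (p (a e)) (p (b e)) (hp (a e)) m
    simp only [RE, if_pos rfl, Pi.sub_apply]
    simpa using this
  · by_cases hwb : w = b e
    · subst hwb
      have hRX : ∀ l : Fin n, RX K a b p e (b e, l) = kRow K (p (b e)) (p (a e)) l := by
        intro l; simp [RX, hwa]
      rw [Finset.sum_congr rfl fun l _ => by rw [hRX l], key]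
      have := kRow_key K (p (b e)) (p (a e)) (hp (b e)) m
      simp only [RE, hwa, if_neg hwa, if_pos rfl, Pi.sub_apply]
      simpa using this
    · have hRX : ∀ l : Fin n, RX K a b p e (w, l) = 0 := by
        intro l; simp [RX, hwa, hwb]
      rw [Finset.sum_congr rfl fun l _ => by rw [hRX l, zero_mul]]
      simp [RE, hwa, hwb]

theorem rigidity_matrix_transfer {V ι : Type*} [Fintype V] [DecidableEq V]
    [Fintype ι] (n : ℕ) (K : ℝ) (a b : ι → V) (hab : ∀ e, a e ≠ b e)
    (p : V → Fin n → ℝ) (hp : ∀ i, 1 + K * dot (p i) (p i) ≠ 0) :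
    RX K a b p * TK K p = RE a b p ∧
      Module.finrank ℝ (LinearMap.ker (Matrix.mulVecLin (RX K a b p))) =
        Module.finrank ℝ (LinearMap.ker (Matrix.mulVecLin (RE a b p))) := by
  have h1 : RX K a b p * TK K p = RE a b p := RX_mul_TK K a b hab p hp
  refine ⟨h1, ?_⟩
  have hdet : IsUnit (TK K p).det :=
    Matrix.isUnit_det_of_right_inverse (TK_mul_TKI K p hp)
  have hrank : (RX K a b p * TK K p).rank = (RX K a b p).rank :=
    Matrix.rank_mul_eq_left_of_isUnit_det _ _ hdet
  rw [h1] at hrank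
  have r1 := LinearMap.finrank_range_add_finrank_ker (Matrix.mulVecLin (RX K a b p))
  have r2 := LinearMap.finrank_range_add_finrank_ker (Matrix.mulVecLin (RE a b p))
  unfold Matrix.rank at hrank
  omega

end
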